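/- Let u* be a convex function on ℝⁿ such that on an open set U, u* is tangent from above at 0 to P*(x) = max(a·xₙ, 0) with a > 0 (i.e., u* ≥ (a xₙ)₊ on U, u*(0) = 0), and suppose {u* = (a xₙ)₊} contains a ball of ℝⁿ centered at a point of {xₙ = 0} ∩ U. If additionally ∂u*(0) is contained in the xₙ-axis, then ∂u*(0) equals the segment [0, a eₙ] = {t a eₙ : 0 ≤ t ≤ 1}. -/

import Mathlib

open MeasureTheory

/-- The subgradient of a convex function `u` (relative to the domain `Ω`) at `x`. -/
def subgrad {n : ℕ} (u : EuclideanSpace ℝ (Fin n) → ℝ) (Ω : Set (EuclideanSpace ℝ (Fin n)))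
    (x : EuclideanSpace ℝ (Fin n)) : Set (EuclideanSpace ℝ (Fin n)) :=
  {p | ∀ y ∈ Ω, u x + (inner ℝ p (y - x) : ℝ) ≤ u y}

/-- The subgradient image `∂u(s)` of a set `s`. -/
def subgradImage {n : ℕ} (u : EuclideanSpace ℝ (Fin n) → ℝ) (Ω : Set (EuclideanSpace ℝ (Fin n)))
    (s : Set (EuclideanSpace ℝ (Fin n))) : Set (EuclideanSpace ℝ (Fin n)) :=
  ⋃ x ∈ s, subgrad u Ω x
theorem stmt_15 (n : ℕ) (hn : 0 < n) (j : Fin n) (hj : (j : ℕ) = n - 1)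
    (ustar : EuclideanSpace ℝ (Fin n) → ℝ) (hconv : ConvexOn ℝ Set.univ ustar)
    (U : Set (EuclideanSpace ℝ (Fin n))) (hU : IsOpen U)
    (h0U : (0 : EuclideanSpace ℝ (Fin n)) ∈ U)
    (a : ℝ) (ha : 0 < a) (h0 : ustar 0 = 0)
    (htan : ∀ x ∈ U, max (a * x j) 0 ≤ ustar x)
    (z : EuclideanSpace ℝ (Fin n)) (ρ : ℝ) (hρ : 0 < ρ) (hz : z j = 0) (hzU : z ∈ U)
    (hball : Metric.ball z ρ ⊆ {x | ustar x = max (a * x j) 0})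
    (haxis : ∀ q ∈ subgrad ustar Set.univ 0, ∀ i : Fin n, i ≠ j → q i = 0) :
    subgrad ustar Set.univ 0 = segment ℝ 0 (a • EuclideanSpace.single j 1) := by
  set e : EuclideanSpace ℝ (Fin n) := EuclideanSpace.single j 1 with he
  have hinner : ∀ (c : ℝ) (y : EuclideanSpace ℝ (Fin n)),
      (inner ℝ (c • e) y : ℝ) = c * y j := by
    intro c y
    rw [real_inner_smul_left, he, EuclideanSpace.inner_single_left]
    simp
  apply Set.Subset.antisymm
  · intro p hp
    have hpe : p = (p j) • e := by
      ext i
      by_cases hij : i = j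
      · subst hij; simp [he, EuclideanSpace.single_apply]
      · simp [he, EuclideanSpace.single_apply, hij, haxis p hp i hij]
    set b := p j with hb
    -- test points
    have htest : ∀ c : ℝ, |c| < ρ → b * c ≤ max (a * c) 0 := by
      intro c hc
      have hmem : z + c • e ∈ Metric.ball z ρ := by
        rw [Metric.mem_ball, dist_self_add_left, norm_smul, he,
          EuclideanSpace.norm_single]
        simpa using hc
      have hval := hball hmem
      have hyj : (z + c • e) j = c := by
        simp [he, EuclideanSpace.single_apply, hz, PiLp.add_apply, PiLp.smul_apply]
      rw [Set.mem_setOf_eq, hyj] at hval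
      have := hp (z + c • e) (Set.mem_univ _)
      rw [h0, sub_zero, zero_add, hpe, hinner, hyj, hval] at this
      exact this
    have hb0 : 0 ≤ b := by
      have := htest (-(ρ/2)) (by rw [abs_neg, abs_of_pos (by linarith)]; linarith)
      have hmax : max (a * -(ρ/2)) 0 = 0 := max_eq_right (by nlinarith)
      rw [hmax] at this
      nlinarith
    have hba : b ≤ a := by
      have := htest (ρ/2) (by rw [abs_of_pos (by linarith)]; linarith)
      have hmax : max (a * (ρ/2)) 0 = a * (ρ/2) := max_eq_left (by nlinarith)
      rw [hmax] at this
      nlinarith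
    rw [segment_eq_image]
    refine ⟨b / a, ⟨div_nonneg hb0 ha.le, (div_le_one ha).mpr hba⟩, ?_⟩
    show (1 - b / a) • (0:EuclideanSpace ℝ (Fin n)) + (b / a) • (a • e) = p
    rw [smul_zero, zero_add, smul_smul, div_mul_cancel₀ _ ha.ne', ← hpe]
  · intro p hp
    rw [segment_eq_image] at hp
    obtain ⟨t, ⟨ht0, ht1⟩, rfl⟩ := hp
    have key : ∀ y : EuclideanSpace ℝ (Fin n), t * a * y j ≤ ustar y := by
      intro y
      have hUbound : ∀ x ∈ U, t * a * x j ≤ ustar x := by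
        intro x hx
        refine le_trans ?_ (htan x hx)
        rcases le_or_gt 0 (a * x j) with h | h
        · calc t * a * x j = t * (a * x j) := by ring
            _ ≤ 1 * (a * x j) := by nlinarith
            _ ≤ max (a * x j) 0 := by simpa using le_max_left _ _
        · calc t * a * x j = t * (a * x j) := by ring
            _ ≤ 0 := by nlinarith
            _ ≤ max (a * x j) 0 := le_max_right _ _
      obtain ⟨δ, hδ, hball0⟩ := Metric.isOpen_iff.mp hU 0 h0U
      set ε : ℝ := min (δ / (2 * (‖y‖ + 1))) (1/2) with hε
      have hy1 : (0:ℝ) < ‖y‖ + 1 := by positivity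
      have hε0 : 0 < ε := lt_min (by positivity) (by norm_num)
      have hε1 : ε ≤ 1/2 := min_le_right _ _
      have hεy : ε * ‖y‖ < δ := by
        have h1 : ε ≤ δ / (2 * (‖y‖ + 1)) := min_le_left _ _
        have h2 : ε * ‖y‖ ≤ δ / (2 * (‖y‖ + 1)) * ‖y‖ :=
          mul_le_mul_of_nonneg_right h1 (norm_nonneg y)
        have h3 : δ / (2 * (‖y‖ + 1)) * ‖y‖ < δ := by
          rw [div_mul_eq_mul_div, div_lt_iff₀ (by positivity)]
          nlinarith [norm_nonneg y]
        linarith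
      have hmemU : ε • y ∈ U := by
        apply hball0
        rw [Metric.mem_ball, dist_zero_right, norm_smul, Real.norm_eq_abs,
          abs_of_pos hε0]
        exact hεy
      have hcvx : ustar (ε • y) ≤ ε * ustar y := by
        have := hconv.2 (Set.mem_univ (0 : EuclideanSpace ℝ (Fin n)))
          (Set.mem_univ y) (by linarith : (0:ℝ) ≤ 1 - ε) hε0.le (by ring)
        simpa [h0] using this
      have hsc := hUbound (ε • y) hmemU
      have hεyj : (ε • y) j = ε * y j := by simp [PiLp.smul_apply]
      rw [hεyj] at hsc
      have : ε * (t * a * y j) ≤ ε * ustar y := by nlinarith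
      exact le_of_mul_le_mul_left this hε0
    intro y _
    rw [h0, sub_zero, zero_add]
    show (inner ℝ ((1 - t) • (0:EuclideanSpace ℝ (Fin n)) + t • (a • e)) y : ℝ) ≤ ustar y
    rw [smul_zero, zero_add, smul_smul, hinner]
    exact key y
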